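/- Proposition 5, case m_i ≥ μ_i (Eq. (24)): assume m_B ≥ μ_B ≥ 1, m_E ≥ μ_E ≥ 1 and N_A ≥ 1. Let F_B(x) = [F₁(x)]^{N_A} with F₁ the κ-μ shadowed CDF with parameters (N_B·ȳ_B, κ_B, N_B·μ_B, N_B·m_B), and let F_E be the κ-μ shadowed CDF with parameters (N_E·ȳ_E, κ_E, N_E·μ_E, N_E·m_E). Then the average secrecy capacity C̄_S = (1/ln 2)·∫₀^∞ (1 − F_B(γ))/(1+γ) dγ − (1/ln 2)·∫₀^∞ (1 − F_B(γ))·(1 − F_E(γ))/(1+γ) dγ equals (1/ln 2)·Σ_{k=1}^{N_A} (−1)^{k+1}·C(N_A,k)·Σ_{(s)∈ρ(k,ν_B)} (k!/(s₁!⋯s_{ν_B}!))·∏_{t=1}^{ν_B} [ (1/Δ₂ᴮ)^{ν_B−t}/(ν_B−t)!·Σ_{w=0}^{min(t−1,β_B)} Bᴮ_w ]^{s_t}·( e^{k/Δ₂ᴮ}·S!·Γᵤ(−S, k/Δ₂ᴮ) − Σ_{j=0}^{β_E} Bᴱⱼ·Σ_{r=0}^{ν_E−j−1} ((1/Δ₂ᴱ)^r/r!)·e^{k/Δ₂ᴮ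 + 1/Δ₂ᴱ}·(r+S)!·Γᵤ(−r−S, k/Δ₂ᴮ + 1/Δ₂ᴱ) ), where S = Σ_{t=1}^{ν_B}(ν_B−t)s_t. -/

import Mathlib

/- κ-μ shadowed parameters and mixture coefficients (case m ≥ μ). -/

noncomputable def Δ₂ (g κ : ℝ) (μ m : ℕ) : ℝ := ((μ * κ + m) / m) * g / (μ * (1 + κ))

noncomputable def Bco (κ : ℝ) (μ m j : ℕ) : ℝ :=
  (Nat.choose (m - μ) j : ℝ) * ((m : ℝ) / (μ * κ + m)) ^ j *
    ((μ * κ) / (μ * κ + m)) ^ (m - μ - j)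

/-- The κ-μ shadowed CDF in the case `m ≥ μ`. -/
noncomputable def Fcdf2 (g κ : ℝ) (μ m : ℕ) (x : ℝ) : ℝ :=
  1 - ∑ j ∈ Finset.range (m - μ + 1), Bco κ μ m j * Real.exp (-x / Δ₂ g κ μ m) *
        ∑ r ∈ Finset.range (m - j), (x / Δ₂ g κ μ m) ^ r / (Nat.factorial r : ℝ)

open MeasureTheory in
/-- The (generalized) upper incomplete gamma function `Γᵤ(a, x) = ∫_x^∞ t^{a−1} e^{−t} dt`,
convergent for every real `a` when `x > 0`. -/
noncomputable def Gammau (a x : ℝ) : ℝ := ∫ t in Set.Ioi x, t ^ (a - 1) * Real.exp (-t)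

open MeasureTheory Set Real Filter Finset

section helpers

lemma integrableOn_rpow_exp {c x : ℝ} (hc : c ≤ 0) (hx : 0 < x) :
    IntegrableOn (fun t => t ^ c * Real.exp (-t)) (Ioi x) := by
  refine Integrable.mono' ((exp_neg_integrableOn_Ioi x one_pos).const_mul (x ^ c)) ?_ ?_
  · refine (ContinuousOn.mul ?_ (Continuous.continuousOn (by continuity))).aestronglyMeasurable
      measurableSet_Ioi
    exact fun t ht => (Real.continuousAt_rpow_const t c
      (Or.inl (ne_of_gt (hx.trans ht)))).continuousWithinAt
  · filter_upwards [ae_restrict_mem measurableSet_Ioi] with t ht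
    have h0 : 0 < t := hx.trans ht
    rw [Real.norm_eq_abs, abs_mul, abs_of_nonneg (Real.rpow_nonneg h0.le c),
      abs_of_nonneg (Real.exp_pos _).le, neg_one_mul]
    exact mul_le_mul_of_nonneg_right (Real.rpow_le_rpow_of_nonpos hx (le_of_lt ht) hc)
      (Real.exp_pos _).le

lemma Gammau_succ {a x : ℝ} (ha : a ≤ 0) (hx : 0 < x) :
    Gammau (a + 1) x = a * Gammau a x + x ^ a * Real.exp (-x) := by
  have key : ∫ t in Ioi x, (t ^ a * Real.exp (-t) - a * (t ^ (a-1) * Real.exp (-t)))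
      = x ^ a * Real.exp (-x) := by
    have := integral_Ioi_of_hasDerivAt_of_tendsto
      (f := fun t => -(t ^ a * Real.exp (-t)))
      (f' := fun t => t ^ a * Real.exp (-t) - a * (t ^ (a-1) * Real.exp (-t)))
      (a := x) (m := 0) ?_ ?_ ?_ ?_
    · rw [this]; ring
    · exact ((Real.continuousAt_rpow_const x a (Or.inl hx.ne')).mul
        ((Real.continuous_exp.comp continuous_neg).continuousAt)).neg.continuousWithinAt
    · intro t ht
      have h0 : t ≠ 0 := (hx.trans ht).ne'
      have h1 : HasDerivAt (fun t : ℝ => t ^ a) (a * t ^ (a-1)) t :=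
        Real.hasDerivAt_rpow_const (Or.inl h0)
      have h2 : HasDerivAt (fun t : ℝ => Real.exp (-t)) (Real.exp (-t) * (-1)) t :=
        (hasDerivAt_neg t).exp
      convert (h1.mul h2).neg using 1
      · rfl
      ring
    · exact (integrableOn_rpow_exp ha hx).sub
        ((integrableOn_rpow_exp (c := a - 1) (by linarith) hx).const_mul a)
    · have h := tendsto_rpow_mul_exp_neg_mul_atTop_nhds_zero a 1 one_pos
      have : (fun t : ℝ => -(t ^ a * Real.exp (-t)))
          = fun t => -(t ^ a * Real.exp (-(1:ℝ) * t)) := by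
        funext t; rw [neg_one_mul]
      rw [this, ← neg_zero]
      exact h.neg
  have hsub := integral_sub (integrableOn_rpow_exp ha hx)
      ((integrableOn_rpow_exp (c := a - 1) (by linarith) hx).const_mul a)
  rw [hsub] at key
  have h3 : Gammau (a+1) x = ∫ t in Ioi x, t ^ a * Real.exp (-t) := by
    unfold Gammau; norm_num
  rw [h3]
  unfold Gammau
  rw [integral_const_mul] at key
  linarith [key]

lemma integral_Ioi_comp_add (f : ℝ → ℝ) (a c : ℝ) :
    ∫ x in Ioi a, f (x + c) = ∫ x in Ioi (a + c), f x := by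
  have h1 : MeasurePreserving (fun x : ℝ => x + c) volume volume :=
    measurePreserving_add_right volume c
  have h2 : MeasurableEmbedding (fun x : ℝ => x + c) :=
    (Homeomorph.addRight c).measurableEmbedding
  have := h1.setIntegral_preimage_emb h2 f (Ioi (a + c))
  rwa [preimage_add_const_Ioi, add_sub_cancel_right] at this

lemma key_zero {b : ℝ} (hb : 0 < b) :
    ∫ t in Ioi (0:ℝ), Real.exp (-(b * t)) / (1 + t) = Real.exp b * Gammau 0 b := by
  have hg := integral_comp_mul_left_Ioi (fun t => t ^ (0 - 1 : ℝ) * Real.exp (-t)) 1 hb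
  rw [mul_one] at hg
  have h0 : Gammau 0 b = b • ∫ x in Ioi (1:ℝ), (b * x) ^ (0 - 1 : ℝ) * Real.exp (-(b * x)) := by
    unfold Gammau
    rw [hg, smul_smul, mul_inv_cancel₀ hb.ne', one_smul]
  have h1 : ∫ x in Ioi (1:ℝ), (b * x) ^ (0 - 1 : ℝ) * Real.exp (-(b * x))
      = ∫ x in Ioi (0:ℝ), (b * (x + 1)) ^ (0 - 1 : ℝ) * Real.exp (-(b * (x + 1))) := by
    have := (integral_Ioi_comp_add (fun t => (b * t) ^ (0 - 1 : ℝ) * Real.exp (-(b * t))) 0 1).symm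
    norm_num at this ⊢
    exact this
  have h2 : ∀ x ∈ Ioi (0:ℝ), (b * (x + 1)) ^ (0 - 1 : ℝ) * Real.exp (-(b * (x + 1)))
      = b⁻¹ * (Real.exp (-b) * (Real.exp (-(b * x)) / (1 + x))) := by
    intro x hx
    have hx0 : (0:ℝ) < x := hx
    have hpos : (0:ℝ) < b * (x + 1) := by positivity
    rw [show (0 - 1 : ℝ) = -1 by ring, Real.rpow_neg_one, mul_inv]
    rw [show -(b * (x + 1)) = -b + -(b * x) by ring, Real.exp_add]
    rw [div_eq_mul_inv]
    ring
  rw [h0, h1, setIntegral_congr_fun measurableSet_Ioi h2]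
  rw [integral_const_mul, integral_const_mul, smul_eq_mul]
  rw [show b * (b⁻¹ * (Real.exp (-b) * ∫ x in Ioi (0:ℝ), Real.exp (-(b*x)) / (1+x)))
    = (b * b⁻¹) * (Real.exp (-b) * ∫ x in Ioi (0:ℝ), Real.exp (-(b*x)) / (1+x)) by ring,
    mul_inv_cancel₀ hb.ne', one_mul, ← mul_assoc, ← Real.exp_add]
  simp

lemma int_aux1 {b : ℝ} (hb : 0 < b) (n : ℕ) :
    IntegrableOn (fun t : ℝ => t ^ n * Real.exp (-(b * t))) (Ioi (0:ℝ)) := by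
  apply integrable_of_isBigO_exp_neg (b := b / 2) (by positivity)
    (Continuous.continuousOn (by continuity))
  have h := tendsto_rpow_mul_exp_neg_mul_atTop_nhds_zero (n:ℝ) (b/2) (by positivity)
  rw [Asymptotics.isBigO_iff]
  refine ⟨1, ?_⟩
  have h2 := (h.abs.eventually_lt_const (by norm_num : |(0:ℝ)| < 1))
  filter_upwards [h2, eventually_ge_atTop (0:ℝ)] with t ht ht0
  have he : Real.exp (-(b*t)) = Real.exp (-(b/2) * t) * Real.exp (-(b/2) * t) := by
    rw [← Real.exp_add]; ring_nf
  have htp : t ^ (n:ℝ) = t ^ n := Real.rpow_natCast t n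
  rw [Real.norm_eq_abs, Real.norm_eq_abs, he, ← mul_assoc, abs_mul]
  have hle : |t ^ n * Real.exp (-(b/2) * t)| ≤ 1 := by
    rw [← htp]; exact le_of_lt ht
  calc |t ^ n * Real.exp (-(b/2)*t)| * |Real.exp (-(b/2)*t)|
      ≤ 1 * |Real.exp (-(b/2)*t)| := mul_le_mul_of_nonneg_right hle (abs_nonneg _)
    _ = 1 * |Real.exp (-(b/2)*t)| := rfl

lemma int_aux1_val {b : ℝ} (hb : 0 < b) (n : ℕ) :
    ∫ t in Ioi (0:ℝ), t ^ n * Real.exp (-(b * t)) = (n.factorial : ℝ) * (1/b) ^ (n+1) := by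
  have h := integral_rpow_mul_exp_neg_mul_Ioi (a := (n:ℝ)+1) (by positivity) hb
  have e1 : ∀ t:ℝ, t ^ ((n:ℝ)+1-1) = (t:ℝ) ^ n := by
    intro t; rw [add_sub_cancel_right, Real.rpow_natCast]
  simp_rw [e1] at h
  rw [h, Real.Gamma_nat_eq_factorial, ← Real.rpow_natCast (1/b) (n+1)]
  push_cast
  ring

lemma int_aux2 {b : ℝ} (hb : 0 < b) (n : ℕ) :
    IntegrableOn (fun t : ℝ => t ^ n * Real.exp (-(b * t)) / (1 + t)) (Ioi (0:ℝ)) := by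
  refine Integrable.mono' (int_aux1 hb n) ?_ ?_
  · refine ContinuousOn.aestronglyMeasurable ?_ measurableSet_Ioi
    refine ContinuousOn.div (Continuous.continuousOn (by continuity))
      (Continuous.continuousOn (by continuity)) ?_
    intro t ht
    have : (0:ℝ) < t := ht
    positivity
  · filter_upwards [ae_restrict_mem measurableSet_Ioi] with t ht
    have h0 : (0:ℝ) < t := ht
    have hnum : (0:ℝ) ≤ t ^ n * Real.exp (-(b*t)) := by positivity
    rw [Real.norm_eq_abs, abs_div, abs_of_nonneg hnum, abs_of_pos (by linarith : (0:ℝ) < 1 + t)]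
    exact div_le_self hnum (by linarith)

lemma key_int (n : ℕ) {b : ℝ} (hb : 0 < b) :
    ∫ t in Ioi (0:ℝ), t ^ n * Real.exp (-(b * t)) / (1 + t)
      = Real.exp b * (n.factorial : ℝ) * Gammau (-(n:ℝ)) b := by
  induction n with
  | zero =>
    simp only [pow_zero, one_mul, Nat.factorial_zero, Nat.cast_one, Nat.cast_zero, neg_zero,
      mul_one]
    exact key_zero hb
  | succ n ih =>
    have hsplit : ∀ t ∈ Ioi (0:ℝ), t^(n+1) * Real.exp (-(b*t))/(1+t)
        = t^n * Real.exp (-(b*t)) - t^n * Real.exp (-(b*t))/(1+t) := by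
      intro t ht
      have h0 : (0:ℝ) < t := ht
      have h1 : (1:ℝ)+t ≠ 0 := by linarith
      field_simp
      ring
    rw [setIntegral_congr_fun measurableSet_Ioi hsplit,
      integral_sub (int_aux1 hb n) (int_aux2 hb n), int_aux1_val hb n, ih]
    have hrec := Gammau_succ (a := -((n:ℝ)+1)) (by rw [neg_nonpos]; positivity) hb
    rw [show -((n:ℝ)+1) + 1 = -(n:ℝ) by ring] at hrec
    have hbpow : b ^ (-((n:ℝ)+1)) = (1/b)^(n+1) := by
      rw [Real.rpow_neg hb.le, show ((n:ℝ)+1) = ((n+1:ℕ):ℝ) by push_cast; ring,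
        Real.rpow_natCast, one_div, inv_pow]
    rw [hbpow] at hrec
    rw [hrec]
    have hexp : Real.exp b * Real.exp (-b) = 1 := by rw [← Real.exp_add]; simp
    rw [show ((n+1:ℕ):ℝ) = (n:ℝ)+1 from by push_cast; ring, Nat.factorial_succ]
    push_cast
    linear_combination (-(n.factorial:ℝ)) * (1/b)^(n+1) * hexp

lemma reindex {ν β : ℕ} (hν : β + 1 ≤ ν) (B : ℕ → ℝ) (c : ℕ → ℝ) :
    ∑ j ∈ Finset.range (β+1), B j * ∑ r ∈ Finset.range (ν - j), c r
    = ∑ t : Fin ν, (∑ w ∈ Finset.range (min t.1 β + 1), B w) * c (ν - 1 - t.1) := by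
  rw [Fin.sum_univ_eq_sum_range
    (fun t => (∑ w ∈ Finset.range (min t β + 1), B w) * c (ν - 1 - t)) ν]
  simp_rw [Finset.mul_sum, Finset.sum_mul]
  rw [Finset.sum_sigma' (Finset.range (β+1)) (fun j => Finset.range (ν - j))
      (fun j r => B j * c r),
    Finset.sum_sigma' (Finset.range ν) (fun t => Finset.range (min t β + 1))
      (fun t w => B w * c (ν - 1 - t))]
  refine Finset.sum_nbij' (fun p => ⟨ν - 1 - p.2, p.1⟩)
    (fun q => ⟨q.2, ν - 1 - q.1⟩) ?_ ?_ ?_ ?_ ?_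
  · rintro ⟨j, r⟩ hp
    simp only [Finset.mem_sigma, Finset.mem_range] at hp ⊢
    omega
  · rintro ⟨t, w⟩ hq
    simp only [Finset.mem_sigma, Finset.mem_range] at hq ⊢
    omega
  · rintro ⟨j, r⟩ hp
    simp only [Finset.mem_sigma, Finset.mem_range] at hp
    simp only [Sigma.mk.inj_iff, heq_eq_eq, true_and, and_true]
    omega
  · rintro ⟨t, w⟩ hq
    simp only [Finset.mem_sigma, Finset.mem_range] at hq
    simp only [Sigma.mk.inj_iff, heq_eq_eq, true_and, and_true]
    omega
  · rintro ⟨j, r⟩ hp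
    simp only [Finset.mem_sigma, Finset.mem_range] at hp
    have h : ν - 1 - (ν - 1 - r) = r := by omega
    simp [h]

lemma delta_pos {g κ : ℝ} {μ m : ℕ} (hg : 0 < g) (hκ : 0 < κ) (hμ : 1 ≤ μ) (hm : 1 ≤ m) :
    0 < Δ₂ g κ μ m := by
  have h1 : (0:ℝ) < μ := by exact_mod_cast hμ
  have h2 : (0:ℝ) < m := by exact_mod_cast hm
  unfold Δ₂
  positivity

lemma one_sub_Fcdf2 {g κ : ℝ} {μ m : ℕ} (hΔ : 0 < Δ₂ g κ μ m) (hμ : 1 ≤ μ) (hm : μ ≤ m)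
    (x : ℝ) :
    1 - Fcdf2 g κ μ m x = Real.exp (-(x / Δ₂ g κ μ m)) *
      ∑ t : Fin m, ((1 / Δ₂ g κ μ m) ^ (m - 1 - t.1) / (Nat.factorial (m - 1 - t.1) : ℝ) *
        ∑ w ∈ Finset.range (min t.1 (m - μ) + 1), Bco κ μ m w) * x ^ (m - 1 - t.1) := by
  have hβ : (m - μ) + 1 ≤ m := by omega
  unfold Fcdf2
  rw [sub_sub_cancel]
  have h1 : ∀ j ∈ Finset.range (m - μ + 1),
      Bco κ μ m j * Real.exp (-x / Δ₂ g κ μ m) *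
        ∑ r ∈ Finset.range (m - j), (x / Δ₂ g κ μ m) ^ r / (Nat.factorial r : ℝ)
      = Real.exp (-(x / Δ₂ g κ μ m)) * (Bco κ μ m j *
        ∑ r ∈ Finset.range (m - j), (x / Δ₂ g κ μ m) ^ r / (Nat.factorial r : ℝ)) := by
    intro j _
    rw [neg_div]
    ring
  rw [Finset.sum_congr rfl h1, ← Finset.mul_sum]
  congr 1
  rw [reindex hβ (fun j => Bco κ μ m j) (fun r => (x / Δ₂ g κ μ m) ^ r / (Nat.factorial r : ℝ))]
  refine Finset.sum_congr rfl fun t _ => ?_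
  rw [div_pow, div_pow, one_pow]
  field_simp

lemma multinomial_cast {ν k : ℕ} {s : Fin ν → ℕ} (hs : s ∈ Finset.Nat.antidiagonalTuple ν k) :
    (Nat.multinomial Finset.univ s : ℝ) = (k.factorial : ℝ) / ∏ t, (Nat.factorial (s t) : ℝ) := by
  have hsum : ∑ t, s t = k := by rwa [Finset.Nat.mem_antidiagonalTuple] at hs
  have hspec := Nat.multinomial_spec Finset.univ s
  rw [hsum] at hspec
  have hprod : (0:ℝ) < ∏ t, (Nat.factorial (s t) : ℝ) := by
    apply Finset.prod_pos; intro t _; exact_mod_cast (Nat.factorial_pos (s t))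
  rw [eq_div_iff hprod.ne', ← Nat.cast_prod, mul_comm, ← Nat.cast_mul, hspec]

lemma pow_expansion {ν : ℕ} (a : Fin ν → ℝ) (Δ x : ℝ) (k : ℕ) :
    (Real.exp (-(x / Δ)) * ∑ t : Fin ν, a t * x ^ (ν - 1 - t.1)) ^ k
    = ∑ s ∈ Finset.Nat.antidiagonalTuple ν k,
        (Nat.multinomial Finset.univ s : ℝ) * (∏ t, a t ^ s t) *
          (x ^ (∑ t : Fin ν, (ν - 1 - t.1) * s t) * Real.exp (-((k / Δ) * x))) := by
  rw [mul_pow, ← Real.exp_nat_mul, Finset.sum_pow_eq_sum_piAntidiag,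
    Finset.piAntidiag_univ_fin_eq_antidiagonalTuple]
  rw [show (k:ℝ) * -(x / Δ) = -((k / Δ) * x) by ring]
  rw [Finset.mul_sum]
  refine Finset.sum_congr rfl fun s hs => ?_
  have hp : ∏ t, (a t * x ^ (ν - 1 - t.1)) ^ s t
      = (∏ t, a t ^ s t) * x ^ (∑ t : Fin ν, (ν - 1 - t.1) * s t) := by
    simp_rw [mul_pow, ← pow_mul]
    rw [Finset.prod_mul_distrib, Finset.prod_pow_eq_pow_sum]
  rw [hp]
  ring

lemma one_sub_pow (G : ℝ) (N : ℕ) :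
    1 - (1 - G) ^ N = ∑ k ∈ Finset.Icc 1 N, (-1:ℝ) ^ (k+1) * (N.choose k : ℝ) * G ^ k := by
  have hx : (1 - G) = (-G) + 1 := by ring
  rw [hx, add_pow]
  have hset : Finset.range (N+1) = insert 0 (Finset.Icc 1 N) := by
    ext k; simp [Finset.mem_range, Finset.mem_Icc]; omega
  rw [hset, Finset.sum_insert (by simp)]
  simp only [pow_zero, one_pow, Nat.sub_zero, Nat.choose_zero_right, Nat.cast_one, one_mul,
    mul_one]
  rw [show ∀ S : ℝ, 1 - (1 + S) = -S from fun S => by ring]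
  rw [← Finset.sum_neg_distrib]
  refine Finset.sum_congr rfl fun k _ => ?_
  rw [neg_pow, pow_succ]
  ring

lemma integral_sum_eval {ι : Type*} (I : Finset ι) (c : ι → ℝ) (n : ι → ℕ) (b : ι → ℝ)
    (hb : ∀ i ∈ I, 0 < b i) :
    ∫ γ in Ioi (0:ℝ), (∑ i ∈ I, c i * (γ ^ n i * Real.exp (-(b i * γ)))) / (1 + γ)
      = ∑ i ∈ I, c i *
        (Real.exp (b i) * ((n i).factorial : ℝ) * Gammau (-(n i : ℝ)) (b i)) := by
  have hpt : ∀ γ : ℝ, (∑ i ∈ I, c i * (γ ^ n i * Real.exp (-(b i * γ)))) / (1 + γ)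
      = ∑ i ∈ I, c i * (γ ^ n i * Real.exp (-(b i * γ)) / (1 + γ)) := by
    intro γ
    rw [Finset.sum_div]
    refine Finset.sum_congr rfl fun i _ => ?_
    ring
  simp_rw [hpt]
  rw [MeasureTheory.integral_finset_sum]
  · refine Finset.sum_congr rfl fun i hi => ?_
    rw [MeasureTheory.integral_const_mul, key_int (n i) (hb i hi)]
  · intro i hi
    exact ((int_aux2 (hb i hi) (n i)).const_mul (c i))

end helpers
theorem main_general (gB κB gE κE : ℝ) (μν ν μνE νE : ℕ) (NA : ℕ)
    (hgB : 0 < gB) (hκB : 0 < κB) (hgE : 0 < gE) (hκE : 0 < κE)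
    (hμν : 1 ≤ μν) (hν : μν ≤ ν) (hμνE : 1 ≤ μνE) (hνE : μνE ≤ νE) :
    ((1 / Real.log 2) * ∫ γ in Set.Ioi (0 : ℝ),
        (1 - (Fcdf2 gB κB μν ν γ) ^ NA) / (1 + γ))
      - ((1 / Real.log 2) * ∫ γ in Set.Ioi (0 : ℝ),
        (1 - (Fcdf2 gB κB μν ν γ) ^ NA) * (1 - Fcdf2 gE κE μνE νE γ) / (1 + γ)) =
      (1 / Real.log 2) *
        ∑ k ∈ Finset.Icc 1 NA, (-1 : ℝ) ^ (k + 1) * (Nat.choose NA k : ℝ) *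
          ∑ s ∈ Finset.Nat.antidiagonalTuple ν k,
            ((Nat.factorial k : ℝ) / ∏ t, (Nat.factorial (s t) : ℝ)) *
            (∏ t : Fin ν,
              ((1 / Δ₂ gB κB μν ν) ^ (ν - 1 - t.1) /
                  (Nat.factorial (ν - 1 - t.1) : ℝ) *
                ∑ w ∈ Finset.range (min t.1 (ν - μν) + 1),
                  Bco κB μν ν w) ^ (s t)) *
            (Real.exp ((k : ℝ) / Δ₂ gB κB μν ν) *
                (Nat.factorial (∑ t : Fin ν, (ν - 1 - t.1) * s t) : ℝ) *
                Gammau (-((∑ t : Fin ν, (ν - 1 - t.1) * s t : ℕ) : ℝ))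
                  ((k : ℝ) / Δ₂ gB κB μν ν)
              - ∑ j ∈ Finset.range (νE - μνE + 1),
                  Bco κE μνE νE j *
                  ∑ r ∈ Finset.range (νE - j),
                    ((1 / Δ₂ gE κE μνE νE) ^ r /
                        (Nat.factorial r : ℝ)) *
                    Real.exp ((k : ℝ) / Δ₂ gB κB μν ν
                        + 1 / Δ₂ gE κE μνE νE) *
                    (Nat.factorial (r + ∑ t : Fin ν, (ν - 1 - t.1) * s t) : ℝ) *
                    Gammau (-(r : ℝ)
                        - ((∑ t : Fin ν, (ν - 1 - t.1) * s t : ℕ) : ℝ))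
                      ((k : ℝ) / Δ₂ gB κB μν ν
                        + 1 / Δ₂ gE κE μνE νE)) := by
  have hΔb : 0 < Δ₂ gB κB μν ν := delta_pos hgB hκB hμν (le_trans hμν hν)
  have hΔE : 0 < Δ₂ gE κE μνE νE := delta_pos hgE hκE hμνE (le_trans hμνE hνE)
  -- abbreviations (as plain defs via have-bound functions is not possible; inline everywhere)
  have hpt1 : ∀ γ : ℝ, 1 - (Fcdf2 gB κB μν ν γ) ^ NA
      = ∑ p ∈ (Finset.Icc 1 NA).sigma (fun k => Finset.Nat.antidiagonalTuple ν k),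
          ((-1:ℝ) ^ (p.1+1) * (NA.choose p.1 : ℝ) * (Nat.multinomial Finset.univ p.2 : ℝ) *
            ∏ t : Fin ν, ((1 / Δ₂ gB κB μν ν) ^ (ν - 1 - t.1) /
                (Nat.factorial (ν - 1 - t.1) : ℝ) *
              ∑ w ∈ Finset.range (min t.1 (ν - μν) + 1), Bco κB μν ν w) ^ (p.2 t)) *
          (γ ^ (∑ t : Fin ν, (ν - 1 - t.1) * p.2 t) *
            Real.exp (-(((p.1 : ℝ) / Δ₂ gB κB μν ν) * γ))) := by
    intro γ
    have hG := one_sub_Fcdf2 hΔb hμν hν γ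
    have hF : Fcdf2 gB κB μν ν γ = 1 - (Real.exp (-(γ / Δ₂ gB κB μν ν)) *
        ∑ t : Fin ν, ((1 / Δ₂ gB κB μν ν) ^ (ν - 1 - t.1) /
            (Nat.factorial (ν - 1 - t.1) : ℝ) *
          ∑ w ∈ Finset.range (min t.1 (ν - μν) + 1), Bco κB μν ν w) * γ ^ (ν - 1 - t.1)) := by
      linarith [hG]
    rw [hF, one_sub_pow]
    refine Eq.trans (Finset.sum_congr rfl fun k _ => ?_)
      (Finset.sum_sigma' (Finset.Icc 1 NA) (fun k => Finset.Nat.antidiagonalTuple ν k)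
        (fun k sf => ((-1:ℝ) ^ (k+1) * (NA.choose k : ℝ) *
            (Nat.multinomial Finset.univ sf : ℝ) *
            ∏ t : Fin ν, ((1 / Δ₂ gB κB μν ν) ^ (ν - 1 - t.1) /
                (Nat.factorial (ν - 1 - t.1) : ℝ) *
              ∑ w ∈ Finset.range (min t.1 (ν - μν) + 1), Bco κB μν ν w) ^ (sf t)) *
          (γ ^ (∑ t : Fin ν, (ν - 1 - t.1) * sf t) *
            Real.exp (-(((k : ℝ) / Δ₂ gB κB μν ν) * γ)))))
    rw [pow_expansion, Finset.mul_sum]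
    refine Finset.sum_congr rfl fun sf _ => ?_
    ring
  have hptE : ∀ γ : ℝ, 1 - Fcdf2 gE κE μνE νE γ
      = ∑ q ∈ (Finset.range (νE - μνE + 1)).sigma (fun j => Finset.range (νE - j)),
          (Bco κE μνE νE q.1 * ((1 / Δ₂ gE κE μνE νE) ^ q.2 / (Nat.factorial q.2 : ℝ))) *
          (γ ^ q.2 * Real.exp (-((1 / Δ₂ gE κE μνE νE) * γ))) := by
    intro γ
    unfold Fcdf2
    rw [sub_sub_cancel]
    have he : Real.exp (-γ / Δ₂ gE κE μνE νE)
        = Real.exp (-((1 / Δ₂ gE κE μνE νE) * γ)) := by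
      rw [show -γ / Δ₂ gE κE μνE νE = -((1 / Δ₂ gE κE μνE νE) * γ) by ring]
    simp only [he]
    refine Eq.trans (Finset.sum_congr rfl fun j _ => ?_)
      (Finset.sum_sigma' (Finset.range (νE - μνE + 1)) (fun j => Finset.range (νE - j))
        (fun j r => (Bco κE μνE νE j *
            ((1 / Δ₂ gE κE μνE νE) ^ r / (Nat.factorial r : ℝ))) *
          (γ ^ r * Real.exp (-((1 / Δ₂ gE κE μνE νE) * γ)))))
    rw [Finset.mul_sum]
    refine Finset.sum_congr rfl fun r _ => ?_
    ring
  have hpt2 : ∀ γ : ℝ, (1 - (Fcdf2 gB κB μν ν γ) ^ NA) * (1 - Fcdf2 gE κE μνE νE γ)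
      = ∑ z ∈ ((Finset.Icc 1 NA).sigma
            (fun k => Finset.Nat.antidiagonalTuple ν k)).sigma
          (fun _ => (Finset.range (νE - μνE + 1)).sigma (fun j => Finset.range (νE - j))),
          (((-1:ℝ) ^ (z.1.1+1) * (NA.choose z.1.1 : ℝ) *
              (Nat.multinomial Finset.univ z.1.2 : ℝ) *
              ∏ t : Fin ν, ((1 / Δ₂ gB κB μν ν) ^ (ν - 1 - t.1) /
                  (Nat.factorial (ν - 1 - t.1) : ℝ) *
                ∑ w ∈ Finset.range (min t.1 (ν - μν) + 1), Bco κB μν ν w) ^ (z.1.2 t)) *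
            (Bco κE μνE νE z.2.1 *
              ((1 / Δ₂ gE κE μνE νE) ^ z.2.2 / (Nat.factorial z.2.2 : ℝ)))) *
          (γ ^ ((∑ t : Fin ν, (ν - 1 - t.1) * z.1.2 t) + z.2.2) *
            Real.exp (-(((z.1.1 : ℝ) / Δ₂ gB κB μν ν + 1 / Δ₂ gE κE μνE νE) * γ))) := by
    intro γ
    rw [hpt1 γ, hptE γ, Finset.sum_mul_sum]
    refine Eq.trans (Finset.sum_congr rfl fun p _ => ?_)
      (Finset.sum_sigma' ((Finset.Icc 1 NA).sigma
          (fun k => Finset.Nat.antidiagonalTuple ν k))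
        (fun _ => (Finset.range (νE - μνE + 1)).sigma (fun j => Finset.range (νE - j)))
        (fun p q => (((-1:ℝ) ^ (p.1+1) * (NA.choose p.1 : ℝ) *
              (Nat.multinomial Finset.univ p.2 : ℝ) *
              ∏ t : Fin ν, ((1 / Δ₂ gB κB μν ν) ^ (ν - 1 - t.1) /
                  (Nat.factorial (ν - 1 - t.1) : ℝ) *
                ∑ w ∈ Finset.range (min t.1 (ν - μν) + 1), Bco κB μν ν w) ^ (p.2 t)) *
            (Bco κE μνE νE q.1 *
              ((1 / Δ₂ gE κE μνE νE) ^ q.2 / (Nat.factorial q.2 : ℝ)))) *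
          (γ ^ ((∑ t : Fin ν, (ν - 1 - t.1) * p.2 t) + q.2) *
            Real.exp (-(((p.1 : ℝ) / Δ₂ gB κB μν ν + 1 / Δ₂ gE κE μνE νE) * γ)))))
    refine Finset.sum_congr rfl fun q _ => ?_
    have hee : Real.exp (-(((p.1 : ℝ) / Δ₂ gB κB μν ν) * γ)) *
        Real.exp (-((1 / Δ₂ gE κE μνE νE) * γ))
        = Real.exp (-(((p.1 : ℝ) / Δ₂ gB κB μν ν + 1 / Δ₂ gE κE μνE νE) * γ)) := by
      rw [← Real.exp_add]; congr 1; ring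
    rw [pow_add, ← hee]
    ring
  have hI1 : (∫ γ in Set.Ioi (0:ℝ), (1 - (Fcdf2 gB κB μν ν γ) ^ NA) / (1 + γ))
      = ∑ p ∈ (Finset.Icc 1 NA).sigma (fun k => Finset.Nat.antidiagonalTuple ν k),
          ((-1:ℝ) ^ (p.1+1) * (NA.choose p.1 : ℝ) * (Nat.multinomial Finset.univ p.2 : ℝ) *
            ∏ t : Fin ν, ((1 / Δ₂ gB κB μν ν) ^ (ν - 1 - t.1) /
                (Nat.factorial (ν - 1 - t.1) : ℝ) *
              ∑ w ∈ Finset.range (min t.1 (ν - μν) + 1), Bco κB μν ν w) ^ (p.2 t)) *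
          (Real.exp ((p.1 : ℝ) / Δ₂ gB κB μν ν) *
            ((Nat.factorial (∑ t : Fin ν, (ν - 1 - t.1) * p.2 t)) : ℝ) *
            Gammau (-((∑ t : Fin ν, (ν - 1 - t.1) * p.2 t : ℕ) : ℝ))
              ((p.1 : ℝ) / Δ₂ gB κB μν ν)) := by
    simp only [hpt1]
    exact integral_sum_eval _ _ _ _ (fun p hp => by
      have hk : 1 ≤ p.1 := by
        rw [Finset.mem_sigma] at hp
        exact (Finset.mem_Icc.mp hp.1).1
      have : (0:ℝ) < (p.1 : ℝ) := by exact_mod_cast hk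
      positivity)
  have hI2 : (∫ γ in Set.Ioi (0:ℝ),
        (1 - (Fcdf2 gB κB μν ν γ) ^ NA) * (1 - Fcdf2 gE κE μνE νE γ) / (1 + γ))
      = ∑ z ∈ ((Finset.Icc 1 NA).sigma
            (fun k => Finset.Nat.antidiagonalTuple ν k)).sigma
          (fun _ => (Finset.range (νE - μνE + 1)).sigma (fun j => Finset.range (νE - j))),
          (((-1:ℝ) ^ (z.1.1+1) * (NA.choose z.1.1 : ℝ) *
              (Nat.multinomial Finset.univ z.1.2 : ℝ) *
              ∏ t : Fin ν, ((1 / Δ₂ gB κB μν ν) ^ (ν - 1 - t.1) /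
                  (Nat.factorial (ν - 1 - t.1) : ℝ) *
                ∑ w ∈ Finset.range (min t.1 (ν - μν) + 1), Bco κB μν ν w) ^ (z.1.2 t)) *
            (Bco κE μνE νE z.2.1 *
              ((1 / Δ₂ gE κE μνE νE) ^ z.2.2 / (Nat.factorial z.2.2 : ℝ)))) *
          (Real.exp ((z.1.1 : ℝ) / Δ₂ gB κB μν ν + 1 / Δ₂ gE κE μνE νE) *
            ((Nat.factorial ((∑ t : Fin ν, (ν - 1 - t.1) * z.1.2 t) + z.2.2)) : ℝ) *
            Gammau (-(((∑ t : Fin ν, (ν - 1 - t.1) * z.1.2 t) + z.2.2 : ℕ) : ℝ))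
              ((z.1.1 : ℝ) / Δ₂ gB κB μν ν + 1 / Δ₂ gE κE μνE νE)) := by
    simp only [hpt2]
    exact integral_sum_eval _ _ _ _ (fun z hz => by
      have hk : 1 ≤ z.1.1 := by
        rw [Finset.mem_sigma] at hz
        have := hz.1
        rw [Finset.mem_sigma] at this
        exact (Finset.mem_Icc.mp this.1).1
      have h1 : (0:ℝ) < (z.1.1 : ℝ) := by exact_mod_cast hk
      positivity)
  rw [hI1, hI2, ← mul_sub]
  congr 1
  simp only [Finset.sum_sigma]
  rw [← Finset.sum_sub_distrib]
  refine Finset.sum_congr rfl fun k hk => ?_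
  rw [Finset.mul_sum, ← Finset.sum_sub_distrib]
  refine Finset.sum_congr rfl fun s hs => ?_
  rw [multinomial_cast hs]
  rw [mul_sub, mul_sub]
  congr 1
  · ring
  rw [← mul_assoc, Finset.mul_sum]
  refine Finset.sum_congr rfl fun j hj => ?_
  rw [Finset.mul_sum, Finset.mul_sum]
  refine Finset.sum_congr rfl fun r hr => ?_
  rw [Nat.add_comm (∑ t : Fin ν, (ν - 1 - t.1) * s t) r]
  rw [show -(((r + ∑ t : Fin ν, (ν - 1 - t.1) * s t : ℕ)) : ℝ)
      = -(r:ℝ) - ((∑ t : Fin ν, (ν - 1 - t.1) * s t : ℕ) : ℝ) from by push_cast; ring]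
  ring


open MeasureTheory Finset in
/-- Proposition 5, case `m_i ≥ μ_i` (Eq. (24)): closed form of the average secrecy capacity
`C̄_S = (1/ln 2)∫₀^∞ (1−F_B(γ))/(1+γ) dγ − (1/ln 2)∫₀^∞ (1−F_B(γ))(1−F_E(γ))/(1+γ) dγ`
for the TAS/MRC MIMO κ-μ shadowed wiretap channel. -/
theorem stmt14 (yB κB yE κE : ℝ) (μB mB NB μE mE NE NA : ℕ)
    (hyB : 0 < yB) (hκB : 0 < κB) (hyE : 0 < yE) (hκE : 0 < κE)
    (hμB : 1 ≤ μB) (hmB : μB ≤ mB) (hμE : 1 ≤ μE) (hmE : μE ≤ mE)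
    (hNB : 1 ≤ NB) (hNE : 1 ≤ NE) (hNA : 1 ≤ NA) :
    ((1 / Real.log 2) * ∫ γ in Set.Ioi (0 : ℝ),
        (1 - (Fcdf2 (NB * yB) κB (NB * μB) (NB * mB) γ) ^ NA) / (1 + γ))
      - ((1 / Real.log 2) * ∫ γ in Set.Ioi (0 : ℝ),
        (1 - (Fcdf2 (NB * yB) κB (NB * μB) (NB * mB) γ) ^ NA) *
          (1 - Fcdf2 (NE * yE) κE (NE * μE) (NE * mE) γ) / (1 + γ)) =
      (1 / Real.log 2) *
        ∑ k ∈ Finset.Icc 1 NA, (-1 : ℝ) ^ (k + 1) * (Nat.choose NA k : ℝ) *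
          ∑ s ∈ Finset.Nat.antidiagonalTuple (NB * mB) k,
            ((Nat.factorial k : ℝ) / ∏ t, (Nat.factorial (s t) : ℝ)) *
            (∏ t : Fin (NB * mB),
              ((1 / Δ₂ (NB * yB) κB (NB * μB) (NB * mB)) ^ (NB * mB - 1 - t.1) /
                  (Nat.factorial (NB * mB - 1 - t.1) : ℝ) *
                ∑ w ∈ Finset.range (min t.1 (NB * mB - NB * μB) + 1),
                  Bco κB (NB * μB) (NB * mB) w) ^ (s t)) *
            (Real.exp ((k : ℝ) / Δ₂ (NB * yB) κB (NB * μB) (NB * mB)) *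
                (Nat.factorial (∑ t : Fin (NB * mB), (NB * mB - 1 - t.1) * s t) : ℝ) *
                Gammau (-((∑ t : Fin (NB * mB), (NB * mB - 1 - t.1) * s t : ℕ) : ℝ))
                  ((k : ℝ) / Δ₂ (NB * yB) κB (NB * μB) (NB * mB))
              - ∑ j ∈ Finset.range (NE * mE - NE * μE + 1),
                  Bco κE (NE * μE) (NE * mE) j *
                  ∑ r ∈ Finset.range (NE * mE - j),
                    ((1 / Δ₂ (NE * yE) κE (NE * μE) (NE * mE)) ^ r /
                        (Nat.factorial r : ℝ)) *
                    Real.exp ((k : ℝ) / Δ₂ (NB * yB) κB (NB * μB) (NB * mB)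
                        + 1 / Δ₂ (NE * yE) κE (NE * μE) (NE * mE)) *
                    (Nat.factorial (r + ∑ t : Fin (NB * mB), (NB * mB - 1 - t.1) * s t) : ℝ) *
                    Gammau (-(r : ℝ)
                        - ((∑ t : Fin (NB * mB), (NB * mB - 1 - t.1) * s t : ℕ) : ℝ))
                      ((k : ℝ) / Δ₂ (NB * yB) κB (NB * μB) (NB * mB)
                        + 1 / Δ₂ (NE * yE) κE (NE * μE) (NE * mE))) := by
  have hNBμ : 1 ≤ NB * μB := Nat.mul_pos hNB hμB
  have hNEμ : 1 ≤ NE * μE := Nat.mul_pos hNE hμE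
  have hgB : (0:ℝ) < (NB : ℝ) * yB := by
    have : (0:ℝ) < (NB : ℝ) := by exact_mod_cast hNB
    positivity
  have hgE : (0:ℝ) < (NE : ℝ) * yE := by
    have : (0:ℝ) < (NE : ℝ) := by exact_mod_cast hNE
    positivity
  exact main_general ((NB : ℝ) * yB) κB ((NE : ℝ) * yE) κE (NB * μB) (NB * mB)
    (NE * μE) (NE * mE) NA hgB hκB hgE hκE hNBμ (Nat.mul_le_mul_left NB hmB)
    hNEμ (Nat.mul_le_mul_left NE hmE)
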